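/- Let α > 0 and γ > 0, let γ₀ denote the Euler–Mascheroni constant, and set S₁ = ∑_{m=0}^{∞} (1/(m+1) − 1/(m + α/γ)) and S₂ = ∑_{m=0}^{∞} 1/(m + α/γ)². Then −1/γ² − (2α/γ³)(−γ₀ + S₁) − (α²/γ⁴) S₂ ≥ −2/γ² + 2αγ₀/γ³ − (2 + π²/6)·(α²/γ⁴). -/

import Mathlib

open Real

lemma summable_basel_shift : Summable (fun m : ℕ => 1 / ((m : ℝ) + 1) ^ 2) := by
  have h : Summable (fun n : ℕ => 1 / (n : ℝ) ^ 2) :=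
    Real.summable_one_div_nat_pow.mpr one_lt_two
  have h2 := (summable_nat_add_iff (f := fun n : ℕ => 1 / (n : ℝ) ^ 2) 1).2 h
  refine h2.congr fun m => ?_
  push_cast
  ring

lemma summable_inv_sq_shift (x : ℝ) (hx : 0 < x) :
    Summable (fun m : ℕ => 1 / ((m : ℝ) + x) ^ 2) := by
  have h := summable_basel_shift.mul_left (1 / min x 1 ^ 2)
  refine h.of_nonneg_of_le (fun m => by positivity) (fun m => ?_)
  have hm0 : (0:ℝ) ≤ (m : ℝ) := Nat.cast_nonneg m
  have hmin : 0 < min x 1 := lt_min hx one_pos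
  have key : ((m : ℝ) + 1) * min x 1 ≤ (m : ℝ) + x := by
    rcases le_total x 1 with h1 | h1
    · rw [min_eq_left h1]; nlinarith
    · rw [min_eq_right h1]; nlinarith
  have e : (1 / min x 1 ^ 2) * (1 / ((m : ℝ) + 1) ^ 2)
      = 1 / (((m : ℝ) + 1) * min x 1) ^ 2 := by
    field_simp
  rw [e]
  apply one_div_le_one_div_of_le (by positivity)
  apply sq_le_sq' <;> nlinarith

lemma hasSum_telescope : HasSum (fun m : ℕ => 1 / ((m : ℝ) + 1) - 1 / ((m : ℝ) + 2)) 1 := by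
  have hnn : ∀ m : ℕ, (0:ℝ) ≤ 1 / ((m : ℝ) + 1) - 1 / ((m : ℝ) + 2) := by
    intro m
    have hm0 : (0:ℝ) ≤ (m : ℝ) := Nat.cast_nonneg m
    have : 1 / ((m : ℝ) + 2) ≤ 1 / ((m : ℝ) + 1) :=
      one_div_le_one_div_of_le (by linarith) (by linarith)
    linarith
  rw [hasSum_iff_tendsto_nat_of_nonneg hnn]
  have key : ∀ n : ℕ, ∑ m ∈ Finset.range n, (1 / ((m : ℝ) + 1) - 1 / ((m : ℝ) + 2))
      = 1 - 1 / ((n : ℝ) + 1) := by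
    intro n
    have h := Finset.sum_range_sub' (f := fun m : ℕ => 1 / ((m : ℝ) + 1)) n
    simp only [Nat.cast_add, Nat.cast_one, Nat.cast_zero] at h
    calc ∑ m ∈ Finset.range n, (1 / ((m : ℝ) + 1) - 1 / ((m : ℝ) + 2))
        = ∑ m ∈ Finset.range n, (1 / ((m : ℝ) + 1) - 1 / ((m : ℝ) + 1 + 1)) := by
          refine Finset.sum_congr rfl fun m _ => by ring_nf
      _ = 1 / ((0 : ℝ) + 1) - 1 / ((n : ℝ) + 1) := h
      _ = 1 - 1 / ((n : ℝ) + 1) := by norm_num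
  simp only [key]
  have := (tendsto_one_div_add_atTop_nhds_zero_nat : Filter.Tendsto (fun n : ℕ => 1 / ((n : ℝ) + 1)) Filter.atTop (nhds 0))
  have h2 := (tendsto_const_nhds (x := (1:ℝ)) (f := Filter.atTop)).sub this
  simpa using h2

lemma tsum_S1_le (x : ℝ) (hx : 0 < x) :
    ∑' m : ℕ, (1 / ((m : ℝ) + 1) - 1 / ((m : ℝ) + x)) ≤ x := by
  have hterm : ∀ m : ℕ, 1 / ((m : ℝ) + 1) - 1 / ((m : ℝ) + x)
      ≤ x * (1 / ((m : ℝ) + 1) - 1 / ((m : ℝ) + 2)) := by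
    intro m
    have hm0 : (0:ℝ) ≤ (m : ℝ) := Nat.cast_nonneg m
    have hm1 : (0:ℝ) < (m : ℝ) + 1 := by linarith
    have hm2 : (0:ℝ) < (m : ℝ) + 2 := by linarith
    have hmx : (0:ℝ) < (m : ℝ) + x := by linarith
    have e1 : 1 / ((m : ℝ) + 1) - 1 / ((m : ℝ) + x)
        = (x - 1) / (((m : ℝ) + 1) * ((m : ℝ) + x)) := by
      field_simp
      ring
    have e2 : x * (1 / ((m : ℝ) + 1) - 1 / ((m : ℝ) + 2))
        = x / (((m : ℝ) + 1) * ((m : ℝ) + 2)) := by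
      field_simp
      try ring
    rw [e1, e2, div_le_div_iff₀ (by positivity) (by positivity)]
    nlinarith [sq_nonneg (x - 1)]
  have hfs : Summable (fun m : ℕ => 1 / ((m : ℝ) + 1) - 1 / ((m : ℝ) + x)) := by
    have hcmp : Summable (fun m : ℕ => (|x - 1| / min x 1) * (1 / ((m : ℝ) + 1) ^ 2)) :=
      summable_basel_shift.mul_left _
    refine (hcmp.of_nonneg_of_le (fun m => by positivity) fun m => ?_).of_abs
    have hm0 : (0:ℝ) ≤ (m : ℝ) := Nat.cast_nonneg m
    have hm1 : (0:ℝ) < (m : ℝ) + 1 := by linarith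
    have hmx : (0:ℝ) < (m : ℝ) + x := by linarith
    have hmin : 0 < min x 1 := lt_min hx one_pos
    have e1 : 1 / ((m : ℝ) + 1) - 1 / ((m : ℝ) + x)
        = (x - 1) / (((m : ℝ) + 1) * ((m : ℝ) + x)) := by
      field_simp
      ring
    have hd : |((m : ℝ) + 1) * ((m : ℝ) + x)| = ((m : ℝ) + 1) * ((m : ℝ) + x) :=
      abs_of_pos (by positivity)
    rw [e1, abs_div, hd, div_le_iff₀ (by positivity)]
    have key : ((m : ℝ) + 1) * min x 1 ≤ (m : ℝ) + x := by
      rcases le_total x 1 with h1 | h1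
      · rw [min_eq_left h1]; nlinarith
      · rw [min_eq_right h1]; nlinarith
    have habs : (0:ℝ) ≤ |x - 1| := abs_nonneg _
    have expand : |x - 1| / min x 1 * (1 / ((m : ℝ) + 1) ^ 2) * (((m : ℝ) + 1) * ((m : ℝ) + x))
        = |x - 1| * (((m : ℝ) + x) / ((( m : ℝ) + 1) * min x 1)) := by
      field_simp
    rw [expand]
    have hr : (1:ℝ) ≤ ((m : ℝ) + x) / (((m : ℝ) + 1) * min x 1) :=
      (one_le_div (by positivity)).2 key
    nlinarith [mul_le_mul_of_nonneg_left hr habs]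
  have hgs : HasSum (fun m : ℕ => x * (1 / ((m : ℝ) + 1) - 1 / ((m : ℝ) + 2))) x := by
    simpa using hasSum_telescope.mul_left x
  calc ∑' m : ℕ, (1 / ((m : ℝ) + 1) - 1 / ((m : ℝ) + x))
      ≤ ∑' m : ℕ, x * (1 / ((m : ℝ) + 1) - 1 / ((m : ℝ) + 2)) :=
        Summable.tsum_le_tsum hterm hfs hgs.summable
    _ = x := hgs.tsum_eq

lemma tsum_S2_le (x : ℝ) (hx : 0 < x) :
    ∑' m : ℕ, 1 / ((m : ℝ) + x) ^ 2 ≤ 1 / x ^ 2 + π ^ 2 / 6 := by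
  have hsum := summable_inv_sq_shift x hx
  rw [Summable.tsum_eq_zero_add hsum]
  have hbasel : HasSum (fun m : ℕ => 1 / ((m : ℝ) + 1) ^ 2) (π ^ 2 / 6) := by
    have h := hasSum_zeta_two
    have h1 : HasSum (fun n : ℕ => 1 / ((n + 1 : ℕ) : ℝ) ^ 2) (π ^ 2 / 6) := by
      rw [hasSum_nat_add_iff (f := fun n : ℕ => 1 / (n : ℝ) ^ 2) 1]
      simpa using h
    refine h1.congr_fun fun n => by push_cast; ring
  have htail : ∑' m : ℕ, 1 / (((m + 1 : ℕ) : ℝ) + x) ^ 2 ≤ π ^ 2 / 6 := by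
    have hle : ∀ m : ℕ, 1 / (((m + 1 : ℕ) : ℝ) + x) ^ 2 ≤ 1 / ((m : ℝ) + 1) ^ 2 := by
      intro m
      have hm0 : (0:ℝ) ≤ (m : ℝ) := Nat.cast_nonneg m
      apply one_div_le_one_div_of_le (by positivity)
      have : ((m : ℝ) + 1) ≤ ((m + 1 : ℕ) : ℝ) + x := by push_cast; linarith
      nlinarith
    calc ∑' m : ℕ, 1 / (((m + 1 : ℕ) : ℝ) + x) ^ 2
        ≤ ∑' m : ℕ, 1 / ((m : ℝ) + 1) ^ 2 :=
          Summable.tsum_le_tsum hle ((summable_nat_add_iff (f := fun m : ℕ => 1 / ((m : ℝ) + x) ^ 2) 1).2 hsum) hbasel.summable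
      _ = π ^ 2 / 6 := hbasel.tsum_eq
  have h0 : 1 / ((0 : ℕ) + x : ℝ) ^ 2 = 1 / x ^ 2 := by norm_num
  push_cast at htail ⊢
  linarith

/-- The deterministic part of the SeLF lower bound for `∂²l/∂γ²` in the generalized
Gamma log-likelihood: with `S₁ = ∑_{m=0}^∞ (1/(m+1) − 1/(m+α/γ))`,
`S₂ = ∑_{m=0}^∞ 1/(m+α/γ)²` and `γ₀` the Euler–Mascheroni constant,
`−1/γ² − (2α/γ³)(−γ₀ + S₁) − (α²/γ⁴)S₂ ≥ −2/γ² + 2αγ₀/γ³ − (2 + π²/6)(α²/γ⁴)`. -/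
theorem self_lower_bound_gamma_deterministic (α γ : ℝ) (hα : 0 < α) (hγ : 0 < γ) :
    -2 / γ ^ 2 + 2 * α * Real.eulerMascheroniConstant / γ ^ 3 -
        (2 + π ^ 2 / 6) * (α ^ 2 / γ ^ 4) ≤
      -1 / γ ^ 2 -
        (2 * α / γ ^ 3) *
          (-Real.eulerMascheroniConstant +
            ∑' m : ℕ, (1 / ((m : ℝ) + 1) - 1 / ((m : ℝ) + α / γ))) -
        (α ^ 2 / γ ^ 4) * ∑' m : ℕ, 1 / ((m : ℝ) + α / γ) ^ 2 := by
  have hx : 0 < α / γ := div_pos hα hγ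
  have hS1 := tsum_S1_le (α / γ) hx
  have hS2 := tsum_S2_le (α / γ) hx
  set S1 := ∑' m : ℕ, (1 / ((m : ℝ) + 1) - 1 / ((m : ℝ) + α / γ)) with hS1def
  set S2 := ∑' m : ℕ, 1 / ((m : ℝ) + α / γ) ^ 2 with hS2def
  clear_value S1 S2
  have h1 : (2 * α / γ ^ 3) * S1 ≤ (2 * α / γ ^ 3) * (α / γ) :=
    mul_le_mul_of_nonneg_left hS1 (by positivity)
  have h2 : (α ^ 2 / γ ^ 4) * S2 ≤ (α ^ 2 / γ ^ 4) * (1 / (α / γ) ^ 2 + π ^ 2 / 6) :=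
    mul_le_mul_of_nonneg_left hS2 (by positivity)
  have e1 : (2 * α / γ ^ 3) * (α / γ) = 2 * (α ^ 2 / γ ^ 4) := by ring
  have e2 : (α ^ 2 / γ ^ 4) * (1 / (α / γ) ^ 2 + π ^ 2 / 6)
      = 1 / γ ^ 2 + π ^ 2 / 6 * (α ^ 2 / γ ^ 4) := by
    field_simp
  rw [e1] at h1
  rw [e2] at h2
  ring_nf at h1 h2 ⊢
  linarith
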